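/- Define f₁(τ) = τ/12 - (1/(2π))·log 2 - (1/π)·Σ_{n=1}^∞ log(1 + e^{-2πnτ}) for τ > 0. Then f₁ is strictly increasing and there exists τ₁ > 0 with f₁(τ₁) = 0; moreover f₁(τ) → +∞ as τ → +∞. -/

import Mathlib

/-- f₁(τ) = τ/12 - log 2/(2π) - (1/π) Σ_{n=1}^∞ log(1 + e^{-2πnτ}). -/
noncomputable def fOne (τ : ℝ) : ℝ :=
  τ / 12 - (1 / (2 * Real.pi)) * Real.log 2
    - (1 / Real.pi) * ∑' n : ℕ, Real.log (1 + Real.exp (-2 * Real.pi * ((n : ℝ) + 1) * τ))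

open Real Filter

noncomputable def gTerm (n : ℕ) (τ : ℝ) : ℝ :=
  Real.log (1 + Real.exp (-2 * Real.pi * ((n : ℝ) + 1) * τ))

lemma gTerm_nonneg (n : ℕ) (τ : ℝ) : 0 ≤ gTerm n τ := by
  apply Real.log_nonneg
  nlinarith [Real.exp_pos (-2 * Real.pi * ((n : ℝ) + 1) * τ)]

lemma gTerm_le (n : ℕ) (τ : ℝ) : gTerm n τ ≤ Real.exp (-2 * Real.pi * τ) ^ (n + 1) := by
  have h1 : gTerm n τ ≤ Real.exp (-2 * Real.pi * ((n : ℝ) + 1) * τ) := by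
    have := Real.log_le_sub_one_of_pos
      (x := 1 + Real.exp (-2 * Real.pi * ((n : ℝ) + 1) * τ))
      (by positivity)
    simpa [gTerm] using this
  calc gTerm n τ ≤ Real.exp (-2 * Real.pi * ((n : ℝ) + 1) * τ) := h1
    _ = Real.exp (-2 * Real.pi * τ) ^ (n + 1) := by
        rw [← Real.exp_nat_mul]; congr 1; push_cast; ring

lemma gTerm_antitone {n : ℕ} {a b : ℝ} (hab : a ≤ b) : gTerm n b ≤ gTerm n a := by
  have hπ := Real.pi_pos
  apply Real.log_le_log (by positivity)
  have : -2 * Real.pi * ((n : ℝ) + 1) * b ≤ -2 * Real.pi * ((n : ℝ) + 1) * a := by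
    have h := mul_le_mul_of_nonneg_left hab
      (show (0:ℝ) ≤ 2 * Real.pi * ((n : ℝ) + 1) by positivity)
    nlinarith [h]
  have := Real.exp_le_exp.mpr this
  linarith

lemma gTerm_summable {τ : ℝ} (hτ : 0 < τ) : Summable (fun n => gTerm n τ) := by
  have hπ := Real.pi_pos
  have hr : Real.exp (-2 * Real.pi * τ) < 1 := by
    rw [Real.exp_lt_one_iff]; nlinarith
  have hr0 : 0 ≤ Real.exp (-2 * Real.pi * τ) := (Real.exp_pos _).le
  have hg : Summable (fun n : ℕ => Real.exp (-2 * Real.pi * τ) ^ (n + 1)) := by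
    simpa [pow_succ] using (summable_geometric_of_lt_one hr0 hr).mul_right
      (Real.exp (-2 * Real.pi * τ))
  exact Summable.of_nonneg_of_le (fun n => gTerm_nonneg n τ) (fun n => gTerm_le n τ) hg

lemma sum_antitone {a b : ℝ} (ha : 0 < a) (hab : a ≤ b) :
    ∑' n, gTerm n b ≤ ∑' n, gTerm n a :=
  Summable.tsum_le_tsum (fun n => gTerm_antitone hab) (gTerm_summable (lt_of_lt_of_le ha hab))
    (gTerm_summable ha)

lemma sum_nonneg' (τ : ℝ) : 0 ≤ ∑' n, gTerm n τ :=
  tsum_nonneg (fun n => gTerm_nonneg n τ)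

lemma fOne_eq (τ : ℝ) : fOne τ
    = τ / 12 - (1 / (2 * Real.pi)) * Real.log 2 - (1 / Real.pi) * ∑' n, gTerm n τ := rfl

lemma fOne_strictMono : StrictMonoOn fOne (Set.Ioi (0 : ℝ)) := by
  intro a ha b hb hab
  have hπ := Real.pi_pos
  have hS := sum_antitone (Set.mem_Ioi.mp ha) hab.le
  rw [fOne_eq, fOne_eq]
  have : (1 / Real.pi) * ∑' n, gTerm n b ≤ (1 / Real.pi) * ∑' n, gTerm n a := by
    apply mul_le_mul_of_nonneg_left hS (by positivity)
  linarith

lemma fOne_tendsto : Filter.Tendsto fOne Filter.atTop Filter.atTop := by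
  have hπ := Real.pi_pos
  apply tendsto_atTop_mono' atTop
    (f₁ := fun τ : ℝ => τ / 12 - (1 / (2 * Real.pi)) * Real.log 2
      - (1 / Real.pi) * ∑' n, gTerm n 1)
  · filter_upwards [eventually_ge_atTop (1:ℝ)] with τ hτ
    rw [fOne_eq]
    have hS := sum_antitone one_pos hτ
    have : (1 / Real.pi) * ∑' n, gTerm n τ ≤ (1 / Real.pi) * ∑' n, gTerm n 1 :=
      mul_le_mul_of_nonneg_left hS (by positivity)
    linarith
  · apply Filter.tendsto_atTop_add_const_right
    apply Filter.tendsto_atTop_add_const_right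
    exact (tendsto_id.atTop_div_const (by norm_num))

lemma fOne_continuousOn : ContinuousOn fOne (Set.Icc (1:ℝ) 12) := by
  have hπ := Real.pi_pos
  have hcont : ContinuousOn (fun τ => ∑' n, gTerm n τ) (Set.Icc (1:ℝ) 12) := by
    apply continuousOn_tsum (u := fun n : ℕ => Real.exp (-2 * Real.pi) ^ (n + 1))
    · intro n
      apply ContinuousOn.log
      · fun_prop
      · intro x _; positivity
    · have hr : Real.exp (-2 * Real.pi) < 1 := by
        rw [Real.exp_lt_one_iff]; nlinarith
      have hr0 : 0 ≤ Real.exp (-2 * Real.pi) := (Real.exp_pos _).le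
      simpa [pow_succ] using (summable_geometric_of_lt_one hr0 hr).mul_right
        (Real.exp (-2 * Real.pi))
    · intro n x hx
      rw [Real.norm_eq_abs, abs_of_nonneg (gTerm_nonneg n x)]
      calc gTerm n x ≤ Real.exp (-2 * Real.pi * x) ^ (n + 1) := gTerm_le n x
        _ ≤ Real.exp (-2 * Real.pi) ^ (n + 1) := by
            apply pow_le_pow_left₀ (Real.exp_pos _).le
            apply Real.exp_le_exp.mpr
            nlinarith [hx.1]
  have : fOne = fun τ => τ / 12 - (1 / (2 * Real.pi)) * Real.log 2
      - (1 / Real.pi) * ∑' n, gTerm n τ := rfl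
  rw [this]
  fun_prop

lemma fOne_one_neg : fOne 1 < 0 := by
  have hπ := Real.pi_pos
  have hπ' : Real.pi < 3.15 := Real.pi_lt_d2
  have hlog2 : (0.6931471803 : ℝ) < Real.log 2 := Real.log_two_gt_d9
  rw [fOne_eq]
  have hS := sum_nonneg' 1
  have h1 : 0 ≤ (1 / Real.pi) * ∑' n, gTerm n 1 := by positivity
  have h2 : (1:ℝ) / 12 < (1 / (2 * Real.pi)) * Real.log 2 := by
    rw [div_lt_iff₀ (by norm_num), one_div, inv_mul_eq_div, div_mul_eq_mul_div,
      lt_div_iff₀ (by positivity)]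
    nlinarith
  linarith

lemma fOne_twelve_pos : 0 < fOne 12 := by
  have hπ := Real.pi_pos
  have hπ3 : 3.141592 < Real.pi := Real.pi_gt_d6
  have hlog2 : Real.log 2 < 0.6931471808 := Real.log_two_lt_d9
  have hlog2' : (0:ℝ) < Real.log 2 := Real.log_pos (by norm_num)
  have hS : ∑' n, gTerm n 12 ≤ 1 := by
    have hhalf : Real.exp (-2 * Real.pi * 12) ≤ (1:ℝ)/2 := by
      rw [show (1:ℝ)/2 = Real.exp (Real.log (1/2)) by
        rw [Real.exp_log]; norm_num]
      apply Real.exp_le_exp.mpr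
      rw [Real.log_div one_ne_zero (by norm_num), Real.log_one]
      nlinarith
    have hsum2 : ∑' n : ℕ, ((1:ℝ)/2) ^ (n + 1) = 1 := by
      have := tsum_geometric_of_lt_one (r := (1:ℝ)/2) (by norm_num) (by norm_num)
      calc ∑' n : ℕ, ((1:ℝ)/2) ^ (n + 1) = (∑' n : ℕ, ((1:ℝ)/2) ^ n) * (1/2) := by
            rw [← tsum_mul_right]; simp [pow_succ]
        _ = 1 := by rw [this]; norm_num
    rw [← hsum2]
    apply Summable.tsum_le_tsum _ (gTerm_summable (by norm_num))
    · have : Summable (fun n : ℕ => ((1:ℝ)/2) ^ n * ((1:ℝ)/2)) :=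
        (summable_geometric_of_lt_one (by norm_num) (by norm_num)).mul_right _
      exact this.congr (fun n => by rw [pow_succ])
    · intro n
      calc gTerm n 12 ≤ Real.exp (-2 * Real.pi * 12) ^ (n + 1) := gTerm_le n 12
        _ ≤ ((1:ℝ)/2) ^ (n + 1) := pow_le_pow_left₀ (Real.exp_pos _).le hhalf _
  rw [fOne_eq]
  have h1 : (1 / Real.pi) * ∑' n, gTerm n 12 ≤ 1 / Real.pi := by
    rw [mul_le_iff_le_one_right] at *
    · exact hS
    · positivity
  have h2 : (1 / (2 * Real.pi)) * Real.log 2 < 0.12 := by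
    rw [one_div, inv_mul_eq_div, div_lt_iff₀ (by positivity)]
    nlinarith
  have h3 : 1 / Real.pi < 0.33 := by
    rw [div_lt_iff₀ hπ]; nlinarith
  linarith

theorem fOne_props :
    StrictMonoOn fOne (Set.Ioi (0 : ℝ)) ∧
    (∃ τ₁ : ℝ, 0 < τ₁ ∧ fOne τ₁ = 0) ∧
    Filter.Tendsto fOne Filter.atTop Filter.atTop := by
  refine ⟨fOne_strictMono, ?_, fOne_tendsto⟩
  have h := intermediate_value_Icc (by norm_num : (1:ℝ) ≤ 12) fOne_continuousOn
  obtain ⟨τ₁, hτ₁, hval⟩ := h ⟨fOne_one_neg.le, fOne_twelve_pos.le⟩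
  exact ⟨τ₁, by linarith [hτ₁.1], hval⟩
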